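/- arXiv:1212.3547 — 7 statements merged into one kernel-verified Lean document; each statement's English description precedes it below -/
import Mathlib

section
/- The codimension of any twisted sector Y of M_{g,n} satisfies codim(Y) ≥ g − 2 + n, with equality if and only if Y is the hyperelliptic twisted sector with n marked Weierstrass points. Concretely: for every (g,n)-admissible datum, 3g − 3g' − Σ_{i=1}^{N−1} d_i + n ≥ g − 2 + n, and equality holds if and only if the datum is (g' = 0, N = 2, d_1 = 2g + 2, a_1 = n). -/
open Finset

/-- `σ(k,i)` for modulus `N`: `0` if `k·i + gcd(i,N) ≡ 0 (mod N)`, `1` otherwise. -/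
def sigmaFn (N k i : ℕ) : ℚ :=
  if (k * i + Nat.gcd i N) % N = 0 then 0 else 1

/-- The age formula for a datum `(g', N; d_1,…,d_{N-1}; a_1,…,a_{N-1})`. -/
def age (g' N : ℕ) (d a : ℕ → ℕ) : ℚ :=
  (3 * (g' : ℚ) - 3) * ((N : ℚ) - 1) / 2
  + (1 / (N : ℚ)) * ∑ i ∈ (Icc 1 (N - 1)).filter (fun i => Nat.gcd i N = 1),
      (a i : ℚ) * ∑ k ∈ Icc 1 (N - 1), (k : ℚ) * sigmaFn N k i
  + (1 / (N : ℚ)) * ∑ i ∈ Icc 1 (N - 1),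
      (d i : ℚ) * ∑ k ∈ Icc 1 (N - 1),
        (k : ℚ) * (Int.fract ((k : ℚ) * (i : ℚ) / (N : ℚ)) + sigmaFn N k i)

/-- The codimension `3g − 3g' − Σ d_i + n` of the datum in `M_{g,n}`. -/
def codim (g n g' N : ℕ) (d : ℕ → ℕ) : ℚ :=
  3 * (g : ℚ) - 3 * (g' : ℚ) - ∑ i ∈ Icc 1 (N - 1), (d i : ℚ) + (n : ℚ)

/-- The twin substitution `d_i ↦ d_{N−i}`. -/
def twin (N : ℕ) (d : ℕ → ℕ) : ℕ → ℕ := fun i => d (N - i)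

/-- A `(g,n)`-admissible datum `(g', N; d_1,…,d_{N-1}; a_1,…,a_{N-1})`. -/
def Admissible (g n g' N : ℕ) (d a : ℕ → ℕ) : Prop :=
  2 ≤ N ∧
  -- (rh) Riemann–Hurwitz
  (2 * (g : ℤ) - 2 = (N : ℤ) * (2 * (g' : ℤ) - 2)
      + ∑ i ∈ Icc 1 (N - 1), ((N : ℤ) - (Nat.gcd i N : ℤ)) * (d i : ℤ)) ∧
  -- (fan)
  ((N : ℤ) ∣ ∑ i ∈ Icc 1 (N - 1), (i : ℤ) * (d i : ℤ)) ∧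
  -- (mp)
  (∑ i ∈ Icc 1 (N - 1), a i = n) ∧
  (∀ i ∈ Icc 1 (N - 1), a i ≤ d i) ∧
  (∀ i ∈ Icc 1 (N - 1), Nat.gcd i N ≠ 1 → a i = 0) ∧
  -- (ne)
  (n = 0 → g' = 0 →
    Nat.gcd N (((Icc 1 (N - 1)).filter (fun i => d i ≠ 0)).gcd id) = 1)

/-- The datum is the hyperelliptic twisted sector with `n` marked Weierstrass points:
`g' = 0`, `N = 2`, `d_1 = 2g+2`, `a_1 = n`. -/
def IsHyperelliptic (g n g' N : ℕ) (d a : ℕ → ℕ) : Prop :=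
  g' = 0 ∧ N = 2 ∧ d 1 = 2 * g + 2 ∧ a 1 = n

set_option maxHeartbeats 1000000

/-- For every `(g,n)`-admissible datum, `codim ≥ g − 2 + n`, with
equality iff the datum is the hyperelliptic twisted sector with `n` marked
Weierstrass points. -/
theorem codim_ge_bound (g n g' N : ℕ) (d a : ℕ → ℕ)
    (hgn : 2 < 2 * g + n) (hadm : Admissible g n g' N d a) :
    (g : ℚ) - 2 + (n : ℚ) ≤ codim g n g' N d ∧
    (codim g n g' N d = (g : ℚ) - 2 + (n : ℚ) ↔ IsHyperelliptic g n g' N d a) := by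
  obtain ⟨hN, hrh, hfan, hmp1, hmp2, hmp3, hne⟩ := hadm
  set s : Finset ℕ := Icc 1 (N - 1) with hs
  set T : ℤ := ∑ i ∈ s, (d i : ℤ) with hTdef
  set S : ℤ := ∑ i ∈ s, ((N : ℤ) - (Nat.gcd i N : ℤ)) * (d i : ℤ) with hSdef
  clear_value s T S
  have hNz : (2 : ℤ) ≤ (N : ℤ) := by exact_mod_cast hN
  have hg'z : (0 : ℤ) ≤ (g' : ℤ) := Int.ofNat_nonneg g'
  have hS : S = 2 * (g : ℤ) - 2 - (N : ℤ) * (2 * (g' : ℤ) - 2) := by linarith [hrh]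
  have hgcd2 : ∀ i ∈ s, 2 * Nat.gcd i N ≤ N := by
    intro i hi
    rw [hs, mem_Icc] at hi
    obtain ⟨h1, h2⟩ := hi
    obtain ⟨k, hk⟩ := Nat.gcd_dvd_right i N
    have hle : Nat.gcd i N ≤ i := Nat.le_of_dvd (by omega) (Nat.gcd_dvd_left i N)
    have hk2 : 2 ≤ k := by
      rcases Nat.lt_or_ge k 2 with h | h
      · interval_cases k <;> omega
      · exact h
    calc 2 * Nat.gcd i N ≤ k * Nat.gcd i N := Nat.mul_le_mul_right _ hk2
      _ = N := by rw [mul_comm]; exact hk.symm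
  have hgcd2' : ∀ i ∈ s, 2 * (Nat.gcd i N : ℤ) ≤ (N : ℤ) := by
    intro i hi; exact_mod_cast hgcd2 i hi
  have hNT : (N : ℤ) * T ≤ 2 * S := by
    rw [hTdef, hSdef, mul_sum, mul_sum]
    apply sum_le_sum
    intro i hi
    have h1 := hgcd2' i hi
    have h2 : (0 : ℤ) ≤ (d i : ℤ) := Int.ofNat_nonneg _
    nlinarith
  have hnT : (n : ℤ) ≤ T := by
    rw [← hmp1, hTdef]
    push_cast
    exact sum_le_sum fun i hi => by exact_mod_cast hmp2 i hi
  rcases Nat.eq_zero_or_pos g with hg0 | hg1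
  · -- g = 0 : no admissible datum exists
    exfalso
    subst hg0
    have hn3 : 3 ≤ n := by omega
    have hS0 : (0 : ℤ) ≤ S := by
      rw [hSdef]
      apply sum_nonneg
      intro i hi
      have := hgcd2' i hi
      have h2 : (0 : ℤ) ≤ (d i : ℤ) := Int.ofNat_nonneg _
      nlinarith
    have hS' : S = 2 * (N : ℤ) - 2 - (N : ℤ) * (2 * (g' : ℤ)) := by
      rw [hS]; push_cast; ring
    have hg'0 : g' = 0 := by
      by_contra h
      have h1 : (1 : ℤ) ≤ (g' : ℤ) := by exact_mod_cast Nat.one_le_iff_ne_zero.2 h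
      nlinarith [mul_le_mul_of_nonneg_left h1 (show (0:ℤ) ≤ (N:ℤ) by linarith)]
    have hg'0' : (g' : ℤ) = 0 := by rw [hg'0]; norm_num
    have hS3 : S = 2 * (N : ℤ) - 2 := by rw [hS', hg'0']; ring
    have hT3 : T ≤ 3 := by
      by_contra h
      push_neg at h
      have h4 : (4 : ℤ) ≤ T := by omega
      nlinarith [mul_le_mul_of_nonneg_left h4 (show (0:ℤ) ≤ (N:ℤ) by linarith)]
    have hn3' : (3 : ℤ) ≤ (n : ℤ) := by exact_mod_cast hn3
    have hTeq : T = 3 := by omega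
    have hneq3 : (n : ℤ) = 3 := by omega
    -- pointwise a i = d i
    have hsumad : ∑ i ∈ s, a i = ∑ i ∈ s, d i := by
      have h1 : ((∑ i ∈ s, d i : ℕ) : ℤ) = T := by rw [hTdef]; push_cast; rfl
      have h2 : ((∑ i ∈ s, a i : ℕ) : ℤ) = (n : ℤ) := by rw [hmp1]
      omega
    have hptw : ∀ i ∈ s, a i = d i := (sum_eq_sum_iff_of_le hmp2).mp hsumad
    have hd1 : ∀ i ∈ s, d i ≠ 0 → Nat.gcd i N = 1 := by
      intro i hi hdi
      by_contra hg
      have h1 := hmp3 i hi hg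
      have h2 := hptw i hi
      omega
    have hSS : S = ((N : ℤ) - 1) * T := by
      rw [hSdef, hTdef, mul_sum]
      apply sum_congr rfl
      intro i hi
      rcases eq_or_ne (d i) 0 with h | h
      · simp [h]
      · rw [hd1 i hi h]; push_cast; ring
    -- S = 2N - 2 and S = 3(N-1) force N = 1
    rw [hTeq] at hSS
    linarith
  · -- g ≥ 1
    have hgz : (1 : ℤ) ≤ (g : ℤ) := by exact_mod_cast hg1
    have hineq : T + 3 * (g' : ℤ) ≤ 2 * (g : ℤ) + 2 := by
      by_contra h
      push_neg at h
      have h4 : 2 * (g : ℤ) + 3 - 3 * (g' : ℤ) ≤ T := by linarith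
      have h5 : (N : ℤ) * (2 * (g : ℤ) + 3 - 3 * (g' : ℤ)) ≤ (N : ℤ) * T :=
        mul_le_mul_of_nonneg_left h4 (by linarith)
      nlinarith [mul_nonneg (show (0:ℤ) ≤ (N:ℤ) - 2 by linarith)
        (show (0:ℤ) ≤ 2 * (g:ℤ) - 1 + (g':ℤ) by linarith)]
    have heqcase : T + 3 * (g' : ℤ) = 2 * (g : ℤ) + 2 →
        g' = 0 ∧ N = 2 ∧ d 1 = 2 * g + 2 ∧ a 1 = n := by
      intro heq
      have hNT' : (N : ℤ) * (2 * (g : ℤ) + 2 - 3 * (g' : ℤ)) ≤ 2 * S := by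
        have : (2 * (g : ℤ) + 2 - 3 * (g' : ℤ)) = T := by linarith
        rw [this]; exact hNT
      have hg'0 : g' = 0 := by
        by_contra h
        have h1 : (1 : ℤ) ≤ (g' : ℤ) := by exact_mod_cast Nat.one_le_iff_ne_zero.2 h
        nlinarith [mul_nonneg (show (0:ℤ) ≤ (N:ℤ) - 2 by linarith)
          (show (0:ℤ) ≤ 2 * (g:ℤ) - 2 + (g':ℤ) by linarith)]
      have hg'0' : (g' : ℤ) = 0 := by rw [hg'0]; norm_num
      have hT4 : T = 2 * (g : ℤ) + 2 := by linarith
      have hN2 : N = 2 := by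
        by_contra hN2'
        have hN3 : 3 ≤ N := by omega
        have hN3' : (3 : ℤ) ≤ (N : ℤ) := by exact_mod_cast hN3
        have hgeq1 : g = 1 := by
          by_contra hg2
          have hg2' : (2 : ℤ) ≤ (g : ℤ) := by
            have : 2 ≤ g := by omega
            exact_mod_cast this
          nlinarith [mul_le_mul_of_nonneg_right hN3'
            (show (0:ℤ) ≤ 2 * (g:ℤ) - 2 by linarith)]
        have hgeq1' : (g : ℤ) = 1 := by rw [hgeq1]; norm_num
        have hS2 : S = 2 * (N : ℤ) := by rw [hS, hg'0', hgeq1']; ring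
        have hTT : T = 4 := by rw [hT4, hgeq1']; norm_num
        have hsum0 : ∑ i ∈ s, ((N : ℤ) - 2 * (Nat.gcd i N : ℤ)) * (d i : ℤ) = 0 := by
          have hcalc : ∑ i ∈ s, ((N : ℤ) - 2 * (Nat.gcd i N : ℤ)) * (d i : ℤ)
              = 2 * S - (N : ℤ) * T := by
            rw [hSdef, hTdef, mul_sum, mul_sum, ← sum_sub_distrib]
            apply sum_congr rfl
            intro i _
            ring
          rw [hcalc, hS2, hTT]; ring
        have hterm0 : ∀ i ∈ s, ((N : ℤ) - 2 * (Nat.gcd i N : ℤ)) * (d i : ℤ) = 0 := by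
          refine (sum_eq_zero_iff_of_nonneg ?_).mp hsum0
          intro i hi
          have h1 := hgcd2' i hi
          have h2 : (0 : ℤ) ≤ (d i : ℤ) := Int.ofNat_nonneg _
          nlinarith
        have hsupp : ∀ i ∈ s, d i ≠ 0 → 2 * i = N := by
          intro i hi hdi
          have h0 := hterm0 i hi
          have hdz : (d i : ℤ) ≠ 0 := by exact_mod_cast hdi
          have hfac : (N : ℤ) - 2 * (Nat.gcd i N : ℤ) = 0 :=
            (mul_eq_zero.mp h0).resolve_right hdz
          have hgi : 2 * Nat.gcd i N = N := by
            have : ((2 * Nat.gcd i N : ℕ) : ℤ) = (N : ℤ) := by push_cast; linarith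
            exact_mod_cast this
          obtain ⟨m, hm⟩ := Nat.gcd_dvd_left i N
          rw [hs, mem_Icc] at hi
          have hc1 : 1 ≤ Nat.gcd i N := by omega
          rcases Nat.lt_or_ge m 2 with hm2 | hm2
          · interval_cases m <;> omega
          · exfalso
            have : 2 * Nat.gcd i N ≤ Nat.gcd i N * m := by
              calc 2 * Nat.gcd i N = Nat.gcd i N * 2 := by ring
                _ ≤ Nat.gcd i N * m := Nat.mul_le_mul_left _ hm2
            omega
        have hex : ∃ i ∈ s, d i ≠ 0 := by
          by_contra h
          push_neg at h
          have : T = 0 := by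
            rw [hTdef]
            apply sum_eq_zero
            intro i hi
            rw [h i hi]; norm_num
          omega
        obtain ⟨i0, hi0, hdi0⟩ := hex
        have h2i0 : 2 * i0 = N := hsupp i0 hi0 hdi0
        have hn0 : n = 0 := by
          rw [← hmp1]
          apply sum_eq_zero
          intro i hi
          by_cases hgcd1 : Nat.gcd i N = 1
          · by_contra ha
            have hdne : d i ≠ 0 := by
              intro h0
              have := hmp2 i hi
              omega
            have h2i : 2 * i = N := hsupp i hi hdne
            have hgii : Nat.gcd i N = i := by
              apply Nat.gcd_eq_left
              exact ⟨2, by omega⟩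
            omega
          · exact hmp3 i hi hgcd1
        have hne' := hne hn0 hg'0
        have hfa : ∀ j ∈ s.filter (fun i => d i ≠ 0), j = i0 := by
          intro j hj
          rw [mem_filter] at hj
          have := hsupp j hj.1 hj.2
          omega
        have hdvd1 : i0 ∣ (s.filter (fun i => d i ≠ 0)).gcd id := by
          apply Finset.dvd_gcd
          intro j hj
          rw [hfa j hj]
          exact dvd_refl i0
        have hdvd2 : i0 ∣ N := ⟨2, by omega⟩
        have hd1' : i0 ∣ 1 := by
          rw [← hne']
          exact Nat.dvd_gcd hdvd2 hdvd1
        have : i0 = 1 := Nat.dvd_one.mp hd1'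
        omega
      subst hN2
      refine ⟨hg'0, rfl, ?_, ?_⟩
      · have hT1 : T = (d 1 : ℤ) := by
          rw [hTdef, hs]
          norm_num
        have : (d 1 : ℤ) = 2 * (g : ℤ) + 2 := by omega
        exact_mod_cast this
      · rw [← hmp1, hs]
        norm_num
    have hcodim : codim g n g' N d = 3 * (g : ℚ) - 3 * (g' : ℚ) - (T : ℚ) + (n : ℚ) := by
      unfold codim
      rw [← hs, hTdef]
      push_cast
      ring
    constructor
    · rw [hcodim]
      have h' : (T : ℚ) + 3 * (g' : ℚ) ≤ 2 * (g : ℚ) + 2 := by exact_mod_cast hineq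
      linarith
    · constructor
      · intro hceq
        rw [hcodim] at hceq
        have h' : (T : ℚ) + 3 * (g' : ℚ) = 2 * (g : ℚ) + 2 := by linarith
        exact heqcase (by exact_mod_cast h')
      · rintro ⟨h1, h2, h3, _⟩
        subst h1 h2
        unfold codim
        rw [show (2 : ℕ) - 1 = 1 from rfl, Finset.Icc_self, Finset.sum_singleton, h3]
        push_cast
        ring
end

section
/- If n > 2g + 2 then there exists no (g,n)-admissible datum. (In particular M_{g,n} has no twisted sectors for n > 2g + 2.) -/
open Finset

/-- If `n > 2g + 2` then there is no `(g,n)`-admissible datum. -/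
theorem no_admissible_datum_of_many_marked_points (g n : ℕ)
    (hgn : 2 < 2 * g + n) (h : 2 * g + 2 < n) :
    ¬ ∃ (g' N : ℕ) (d a : ℕ → ℕ), Admissible g n g' N d a := by
  rintro ⟨g', N, d, a, hN, hrh, -, hsum, hle, hzero, -⟩
  have hN0 : 0 < N := by omega
  have key : ∀ i ∈ Icc 1 (N - 1),
      (a i : ℤ) * ((N : ℤ) - 1) ≤ ((N : ℤ) - (Nat.gcd i N : ℤ)) * (d i : ℤ) := by
    intro i hi
    by_cases hg : Nat.gcd i N = 1
    · rw [hg]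
      push_cast
      have := hle i hi
      have h1 : (1 : ℤ) ≤ (N : ℤ) := by exact_mod_cast hN0
      have : (a i : ℤ) ≤ (d i : ℤ) := by exact_mod_cast this
      nlinarith
    · rw [hzero i hi hg]
      have hgcd : Nat.gcd i N ≤ N := Nat.gcd_le_right _ hN0
      have : (Nat.gcd i N : ℤ) ≤ (N : ℤ) := by exact_mod_cast hgcd
      have hd : (0:ℤ) ≤ (d i : ℤ) := Int.ofNat_nonneg _
      push_cast
      nlinarith
  have hsumle := Finset.sum_le_sum key
  rw [← Finset.sum_mul] at hsumle
  have hcast : (∑ i ∈ Icc 1 (N - 1), (a i : ℤ)) = (n : ℤ) := by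
    rw [← Nat.cast_sum, hsum]
  rw [hcast] at hsumle
  have hrh' : ∑ i ∈ Icc 1 (N - 1), ((N : ℤ) - (Nat.gcd i N : ℤ)) * (d i : ℤ)
      = 2 * (g : ℤ) - 2 - (N : ℤ) * (2 * (g' : ℤ) - 2) := by linarith
  rw [hrh'] at hsumle
  have hN2 : (2 : ℤ) ≤ (N : ℤ) := by exact_mod_cast hN
  have hg'0 : (0 : ℤ) ≤ (g' : ℤ) := Int.ofNat_nonneg _
  have hn : (2 * (g : ℤ) + 2 + 1 : ℤ) ≤ (n : ℤ) := by exact_mod_cast h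
  have hg0 : (0 : ℤ) ≤ (g : ℤ) := Int.ofNat_nonneg _
  nlinarith [mul_nonneg (mul_nonneg hg'0 (by linarith : (0:ℤ) ≤ (N:ℤ))) (by norm_num : (0:ℤ) ≤ 2)]
end

section
/- For every (g,n)-admissible datum Y with twin datum Y', the marked-point contributions to the ages satisfy |a_mark(Y) − a_mark(Y')| ≤ ((N − 2)/N) · Σ_{i: gcd(i,N)=1} a_i. -/
open Finset

/-- The marked-point contribution `a_mark` to the age. -/
def ageMark (N : ℕ) (a : ℕ → ℕ) : ℚ :=
  (1 / (N : ℚ)) * ∑ i ∈ (Icc 1 (N - 1)).filter (fun i => Nat.gcd i N = 1),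
      (a i : ℚ) * ∑ k ∈ Icc 1 (N - 1), (k : ℚ) * sigmaFn N k i


noncomputable def cInv (N i : ℕ) : ℕ := (-(i : ZMod N)⁻¹).val

section
variable {N i : ℕ}

lemma cInv_pos (hN : 2 ≤ N) (hco : Nat.gcd i N = 1) : 1 ≤ cInv N i := by
  haveI : NeZero N := ⟨by omega⟩
  haveI : Fact (1 < N) := ⟨by omega⟩
  have hu : IsUnit (i : ZMod N) := (ZMod.isUnit_iff_coprime i N).2 hco
  have hne : (-(i : ZMod N)⁻¹) ≠ 0 := by
    simp only [ne_eq, neg_eq_zero]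
    intro h
    have h2 : ((i : ZMod N)⁻¹) * i = 1 := ZMod.inv_mul_of_unit _ hu
    rw [h, zero_mul] at h2
    exact zero_ne_one h2
  have := (ZMod.val_eq_zero _).not.2 hne
  unfold cInv; omega

lemma cInv_lt (hN : 2 ≤ N) : cInv N i ≤ N - 1 := by
  haveI : NeZero N := ⟨by omega⟩
  have := ZMod.val_lt (-(i : ZMod N)⁻¹)
  unfold cInv; omega

lemma filter_sigma_eq (hN : 2 ≤ N) (hco : Nat.gcd i N = 1) :
    (Icc 1 (N-1)).filter (fun k => (k * i + Nat.gcd i N) % N = 0) = {cInv N i} := by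
  haveI : NeZero N := ⟨by omega⟩
  have hu : IsUnit (i : ZMod N) := (ZMod.isUnit_iff_coprime i N).2 hco
  ext k
  simp only [mem_filter, mem_Icc, mem_singleton, hco]
  constructor
  · rintro ⟨⟨hk1, hk2⟩, hk⟩
    have hz : ((k * i + 1 : ℕ) : ZMod N) = 0 := by
      rw [ZMod.natCast_eq_zero_iff]
      exact Nat.dvd_of_mod_eq_zero hk
    push_cast at hz
    have hkc : (k : ZMod N) = -(i : ZMod N)⁻¹ := by
      have h1 : (k : ZMod N) * i = -1 := by linear_combination hz
      have h2 : (k : ZMod N) * i * (i : ZMod N)⁻¹ = -1 * (i : ZMod N)⁻¹ := by rw [h1]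
      rwa [mul_assoc, ZMod.mul_inv_of_unit _ hu, mul_one, neg_one_mul] at h2
    have : (k : ZMod N).val = cInv N i := by rw [hkc]; rfl
    rwa [ZMod.val_cast_of_lt (by omega)] at this
  · rintro rfl
    refine ⟨⟨cInv_pos hN hco, cInv_lt hN⟩, ?_⟩
    have hz : ((cInv N i * i + 1 : ℕ) : ZMod N) = 0 := by
      push_cast
      unfold cInv
      rw [ZMod.natCast_zmod_val, neg_mul, ZMod.inv_mul_of_unit _ hu]
      ring
    rw [ZMod.natCast_eq_zero_iff] at hz
    exact Nat.mod_eq_zero_of_dvd hz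
    


lemma cInv_twin (hN : 2 ≤ N) (hi1 : 1 ≤ i) (hi2 : i ≤ N - 1) (hco : Nat.gcd i N = 1) :
    cInv N (N - i) = N - cInv N i := by
  haveI : NeZero N := ⟨by omega⟩
  haveI : Fact (1 < N) := ⟨by omega⟩
  have hu : IsUnit (i : ZMod N) := (ZMod.isUnit_iff_coprime i N).2 hco
  have hcast : ((N - i : ℕ) : ZMod N) = -(i : ZMod N) := by
    have : ((N - i : ℕ) : ZMod N) + (i : ZMod N) = 0 := by
      rw [← Nat.cast_add, Nat.sub_add_cancel (by omega), ZMod.natCast_self]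
    linear_combination this
  have hinv : ((N - i : ℕ) : ZMod N)⁻¹ = -(i : ZMod N)⁻¹ := by
    apply ZMod.inv_eq_of_mul_eq_one
    rw [hcast, neg_mul_neg, ZMod.mul_inv_of_unit _ hu]
  have hne : ((i : ZMod N)⁻¹) ≠ 0 := by
    intro h
    have h2 : ((i : ZMod N)⁻¹) * i = 1 := ZMod.inv_mul_of_unit _ hu
    rw [h, zero_mul] at h2
    exact zero_ne_one h2
  unfold cInv
  rw [hinv, neg_neg, ZMod.neg_val, if_neg hne]
  have := ZMod.val_lt ((i : ZMod N)⁻¹)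
  omega

lemma sigma_sum (hN : 2 ≤ N) (hco : Nat.gcd i N = 1) :
    ∑ k ∈ Icc 1 (N - 1), (k : ℚ) * sigmaFn N k i
      = (∑ k ∈ Icc 1 (N - 1), (k : ℚ)) - (cInv N i : ℚ) := by
  have hstep : ∀ k ∈ Icc 1 (N - 1), (k : ℚ) * sigmaFn N k i
      = (k : ℚ) - (if (k * i + Nat.gcd i N) % N = 0 then (k : ℚ) else 0) := by
    intro k _
    unfold sigmaFn
    split <;> ring
  rw [Finset.sum_congr rfl hstep, Finset.sum_sub_distrib, ← Finset.sum_filter,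
    filter_sigma_eq hN hco, Finset.sum_singleton]

end

/-- For every `(g,n)`-admissible datum and its twin,
`|a_mark(Y) − a_mark(Y')| ≤ ((N − 2)/N)·Σ_{gcd(i,N)=1} a_i`. -/
theorem abs_ageMark_sub_le (g n g' N : ℕ) (d a : ℕ → ℕ)
    (hgn : 2 < 2 * g + n) (hadm : Admissible g n g' N d a) :
    |ageMark N a - ageMark N (twin N a)|
      ≤ ((N : ℚ) - 2) / (N : ℚ)
        * ∑ i ∈ (Icc 1 (N - 1)).filter (fun i => Nat.gcd i N = 1), (a i : ℚ) := by
  classical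
  obtain ⟨hN, -, -, -, -, -, -⟩ := hadm
  have hNQ : (2:ℚ) ≤ (N:ℚ) := by exact_mod_cast hN
  set P := (Icc 1 (N - 1)).filter (fun i => Nat.gcd i N = 1) with hP
  set T := ∑ k ∈ Icc 1 (N - 1), (k : ℚ) with hT
  have hmem : ∀ i ∈ P, 1 ≤ i ∧ i ≤ N - 1 ∧ Nat.gcd i N = 1 := by
    intro i hi
    simp only [hP, mem_filter, mem_Icc] at hi
    exact ⟨hi.1.1, hi.1.2, hi.2⟩
  have h1 : ageMark N a = (1 / (N:ℚ)) * ∑ i ∈ P, (a i : ℚ) * (T - (cInv N i : ℚ)) := by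
    unfold ageMark
    congr 1
    refine Finset.sum_congr rfl fun i hi => ?_
    rw [sigma_sum hN (hmem i hi).2.2]
  have h2 : ageMark N (twin N a)
      = (1 / (N:ℚ)) * ∑ i ∈ P, (a i : ℚ) * (T - ((N:ℚ) - (cInv N i : ℚ))) := by
    unfold ageMark twin
    congr 1
    have step1 : ∑ i ∈ P, (a (N - i) : ℚ) * ∑ k ∈ Icc 1 (N - 1), (k : ℚ) * sigmaFn N k i
        = ∑ i ∈ P, (a (N - i) : ℚ) * (T - (cInv N i : ℚ)) := by
      refine Finset.sum_congr rfl fun i hi => ?_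
      rw [sigma_sum hN (hmem i hi).2.2]
    rw [step1]
    refine Finset.sum_nbij' (fun i => N - i) (fun i => N - i) ?_ ?_ ?_ ?_ ?_
    · intro i hi
      obtain ⟨hi1, hi2, hco⟩ := hmem i hi
      simp only [hP, mem_filter, mem_Icc]
      refine ⟨⟨by omega, by omega⟩, ?_⟩
      rw [Nat.gcd_self_sub_left (by omega)]
      exact hco
    · intro i hi
      obtain ⟨hi1, hi2, hco⟩ := hmem i hi
      simp only [hP, mem_filter, mem_Icc]
      refine ⟨⟨by omega, by omega⟩, ?_⟩
      rw [Nat.gcd_self_sub_left (by omega)]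
      exact hco
    · intro i hi
      obtain ⟨hi1, hi2, -⟩ := hmem i hi
      show N - (N - i) = i
      omega
    · intro i hi
      obtain ⟨hi1, hi2, -⟩ := hmem i hi
      show N - (N - i) = i
      omega
    · intro i hi
      obtain ⟨hi1, hi2, hco⟩ := hmem i hi
      show (a (N - i) : ℚ) * (T - (cInv N i : ℚ))
        = (a (N - i) : ℚ) * (T - ((N:ℚ) - (cInv N (N - i) : ℚ)))
      have htw : cInv N (N - i) = N - cInv N i := cInv_twin hN hi1 hi2 hco
      have hle : cInv N i ≤ N := le_trans (cInv_lt hN) (by omega)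
      rw [htw, Nat.cast_sub hle]
      ring
  rw [h1, h2, ← mul_sub, ← Finset.sum_sub_distrib]
  have hterm : ∀ i ∈ P, (a i : ℚ) * (T - (cInv N i : ℚ))
      - (a i : ℚ) * (T - ((N:ℚ) - (cInv N i : ℚ)))
      = (a i : ℚ) * ((N:ℚ) - 2 * (cInv N i : ℚ)) := by
    intro i _
    ring
  rw [Finset.sum_congr rfl hterm, abs_mul,
    abs_of_pos (by positivity : (0:ℚ) < 1 / (N:ℚ))]
  have hbound : |∑ i ∈ P, (a i : ℚ) * ((N:ℚ) - 2 * (cInv N i : ℚ))|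
      ≤ ∑ i ∈ P, (a i : ℚ) * ((N:ℚ) - 2) := by
    refine (Finset.abs_sum_le_sum_abs _ _).trans (Finset.sum_le_sum fun i hi => ?_)
    obtain ⟨hi1, hi2, hco⟩ := hmem i hi
    rw [abs_mul, abs_of_nonneg (by positivity : (0:ℚ) ≤ (a i : ℚ))]
    have hc1 : 1 ≤ cInv N i := cInv_pos hN hco
    have hc2 : cInv N i ≤ N - 1 := cInv_lt hN
    have hc1q : (1:ℚ) ≤ (cInv N i : ℚ) := by exact_mod_cast hc1
    have hc2q : (cInv N i : ℚ) + 1 ≤ (N:ℚ) := by exact_mod_cast (by omega : cInv N i + 1 ≤ N)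
    have habs : |(N:ℚ) - 2 * (cInv N i : ℚ)| ≤ (N:ℚ) - 2 := by
      rw [abs_le]
      constructor <;> linarith
    exact mul_le_mul_of_nonneg_left habs (by positivity)
  calc 1 / (N:ℚ) * |∑ i ∈ P, (a i : ℚ) * ((N:ℚ) - 2 * (cInv N i : ℚ))|
      ≤ 1 / (N:ℚ) * ∑ i ∈ P, (a i : ℚ) * ((N:ℚ) - 2) := by
        exact mul_le_mul_of_nonneg_left hbound (by positivity)
    _ = ((N:ℚ) - 2) / (N:ℚ) * ∑ i ∈ P, (a i : ℚ) := by
        rw [← Finset.sum_mul]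
        ring
end

section
/- For every (g,n)-admissible datum Y with twin datum Y', and every proper divisor σ of N, the σ-parts of the ages satisfy |a_σ(Y) − a_σ(Y')| ≤ ((N − 2σ)(N/σ + 5))/(6N) · Σ_{i: gcd(i,N)=σ} d_i. -/
open Finset

/-- The `σ`-part `a_σ` of the age. -/
def ageSigma (N s : ℕ) (d : ℕ → ℕ) : ℚ :=
  (1 / (N : ℚ)) * ∑ i ∈ (Icc 1 (N - 1)).filter (fun i => Nat.gcd i N = s),
      (d i : ℚ) * ∑ k ∈ Icc 1 (N - 1),
        (k : ℚ) * (Int.fract ((k : ℚ) * (i : ℚ) / (N : ℚ)) + sigmaFn N k i)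

private lemma sum_range_cast (m : ℕ) : ∑ u ∈ range m, (u : ℚ) = m * (m - 1) / 2 := by
  induction m with
  | zero => simp
  | succ k ih => rw [Finset.sum_range_succ, ih]; push_cast; ring

private lemma sum_range_cast_sq (m : ℕ) :
    ∑ u ∈ range m, (u : ℚ) ^ 2 = m * (m - 1) * (2 * m - 1) / 6 := by
  induction m with
  | zero => simp
  | succ k ih => rw [Finset.sum_range_succ, ih]; push_cast; ring

private lemma coprime_of_mul_mod_eq_one {a b m : ℕ} (h : a * b % m = 1) :
    Nat.gcd b m = 1 := by
  have h2 := Nat.div_add_mod (a * b) m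
  have hd1 : Nat.gcd b m ∣ a * b := Dvd.dvd.mul_left (Nat.gcd_dvd_left b m) a
  have hd2 : Nat.gcd b m ∣ m * (a * b / m) := Dvd.dvd.mul_right (Nat.gcd_dvd_right b m) _
  have he : a * b - m * (a * b / m) = 1 := by omega
  have : Nat.gcd b m ∣ 1 := he ▸ Nat.dvd_sub hd1 hd2
  exact Nat.dvd_one.mp this

private lemma mod_inj {m j u w : ℕ} (hc : Nat.gcd j m = 1) (hu : u < m) (hw : w < m)
    (h : u * j % m = w * j % m) : u = w := by
  have hmc : Nat.gcd m j = 1 := by rwa [Nat.gcd_comm]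
  have h2 : u ≡ w [MOD m] := Nat.ModEq.cancel_right_of_coprime hmc h
  rwa [Nat.ModEq, Nat.mod_eq_of_lt hu, Nat.mod_eq_of_lt hw] at h2

private lemma mod_mem_Ico {m j u : ℕ} (hm : 0 < m) (hc : Nat.gcd j m = 1)
    (hu : u ∈ Ico 1 m) : u * j % m ∈ Ico 1 m := by
  simp only [Finset.mem_Ico] at *
  refine ⟨?_, Nat.mod_lt _ hm⟩
  rcases Nat.eq_zero_or_pos (u * j % m) with h0 | h1
  · exfalso
    have hdvd : m ∣ u * j := Nat.dvd_of_mod_eq_zero h0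
    have hmj : Nat.Coprime m j := by rwa [Nat.Coprime, Nat.gcd_comm]
    have hdu : m ∣ u := hmj.dvd_of_dvd_mul_right hdvd
    have := Nat.le_of_dvd (by omega) hdu
    omega
  · exact h1

private lemma eq_of_dvd_lt_two_mul {m x : ℕ} (hd : m ∣ x) (h1 : 0 < x) (h2 : x < 2 * m) :
    x = m := by
  have hm : m ≤ x := Nat.le_of_dvd h1 hd
  have hd2 : m ∣ x - m := Nat.dvd_sub hd dvd_rfl
  rcases Nat.eq_zero_or_pos (x - m) with h | h
  · omega
  · have := Nat.le_of_dvd h hd2; omega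

private lemma sum_Ico_mul_mod (m j : ℕ) (hm : 2 ≤ m) (hc : Nat.gcd j m = 1) (F : ℕ → ℚ) :
    ∑ u ∈ Ico 1 m, F (u * j % m) = ∑ u ∈ Ico 1 m, F u := by
  obtain ⟨t, -, ht⟩ := Nat.exists_mul_mod_eq_one_of_coprime hc hm
  have hct : Nat.gcd t m = 1 := coprime_of_mul_mod_eq_one ht
  refine Finset.sum_nbij' (fun u => u * j % m) (fun v => v * t % m)
    (fun u hu => mod_mem_Ico (by omega) hc hu)
    (fun v hv => mod_mem_Ico (by omega) hct hv) ?_ ?_ (fun u hu => rfl)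
  · intro u hu
    simp only [mem_Ico] at hu
    show u * j % m * t % m = u
    rw [Nat.mod_mul_mod, mul_assoc, ← Nat.mul_mod_mod, ht, mul_one, Nat.mod_eq_of_lt hu.2]
  · intro v hv
    simp only [mem_Ico] at hv
    show v * t % m * j % m = v
    rw [Nat.mod_mul_mod, mul_assoc, ← Nat.mul_mod_mod, mul_comm t j, ht, mul_one,
      Nat.mod_eq_of_lt hv.2]

private lemma sum_range_mul_periodic (m : ℕ) (f : ℕ → ℚ) (s : ℕ) :
    ∑ k ∈ range (s * m), (k : ℚ) * f (k % m)
      = (m : ℚ) * (∑ q ∈ range s, (q : ℚ)) * (∑ u ∈ range m, f u)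
        + (s : ℚ) * ∑ u ∈ range m, (u : ℚ) * f u := by
  induction s with
  | zero => simp
  | succ t ih =>
    have hsm : (t + 1) * m = t * m + m := by ring
    rw [hsm, Finset.range_eq_Ico,
      ← Finset.sum_Ico_consecutive _ (Nat.zero_le (t * m)) (Nat.le_add_right (t * m) m),
      ← Finset.range_eq_Ico, ih, Finset.sum_Ico_eq_sum_range]
    have hred : t * m + m - t * m = m := by omega
    rw [hred]
    have hcong : ∀ u ∈ range m, ((t * m + u : ℕ) : ℚ) * f ((t * m + u) % m)
        = ((t : ℚ) * m * f u + (u : ℚ) * f u) := by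
      intro u hu
      have h1 : (t * m + u) % m = u := by
        rw [add_comm, Nat.add_mul_mod_self_right, Nat.mod_eq_of_lt (mem_range.mp hu)]
      rw [h1]; push_cast; ring
    rw [Finset.sum_congr rfl hcong, Finset.sum_add_distrib, ← Finset.mul_sum,
      Finset.sum_range_succ]
    push_cast; ring

private def chiFn (m v : ℕ) : ℚ := if (v + 1) % m = 0 then 0 else 1

private def ffFn (m v : ℕ) : ℚ := (v : ℚ) / m + chiFn m v

private lemma sum_Ico_cast (m : ℕ) (hm : 0 < m) :
    ∑ u ∈ Ico 1 m, (u : ℚ) = m * (m - 1) / 2 := by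
  have h : ∑ u ∈ range m, (u : ℚ) = ∑ u ∈ Ico 1 m, (u : ℚ) := by
    rw [Finset.range_eq_Ico, Finset.sum_eq_sum_Ico_succ_bot hm]; simp
  rw [← h, sum_range_cast]

private lemma P_diff_bound (m j : ℕ) (hm : 2 ≤ m) (hj1 : 1 ≤ j) (hjm : j < m)
    (hc : Nat.gcd j m = 1) :
    |(∑ u ∈ range m, (u : ℚ) * ffFn m (u * j % m))
      - ∑ u ∈ range m, (u : ℚ) * ffFn m (u * (m - j) % m)|
      ≤ ((m : ℚ) - 1) * ((m : ℚ) - 2) / 6 + ((m : ℚ) - 2) := by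
  have hm0 : 0 < m := by omega
  have hc' : Nat.gcd (m - j) m = 1 := by rw [Nat.gcd_self_sub_left hjm.le]; exact hc
  have hmq : (2 : ℚ) ≤ (m : ℚ) := by exact_mod_cast hm
  -- reduce to Ico 1 m
  have hrange : ∀ jj : ℕ, ∑ u ∈ range m, (u : ℚ) * ffFn m (u * jj % m)
      = ∑ u ∈ Ico 1 m, (u : ℚ) * ffFn m (u * jj % m) := by
    intro jj
    rw [Finset.range_eq_Ico, Finset.sum_eq_sum_Ico_succ_bot hm0]
    simp
  rw [hrange j, hrange (m - j)]
  -- v' = m - v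
  have key1 : ∀ u ∈ Ico 1 m, u * (m - j) % m = m - u * j % m := by
    intro u hu
    have h1 := mod_mem_Ico hm0 hc' hu
    have h2 := mod_mem_Ico hm0 hc hu
    simp only [mem_Ico] at h1 h2
    have hmul : u * j + u * (m - j) = u * m := by
      rw [← Nat.mul_add, Nat.add_sub_cancel' hjm.le]
    have h3 : (u * j % m + u * (m - j) % m) % m = 0 := by
      rw [← Nat.add_mod, hmul, Nat.mul_mod_left]
    have h4 := eq_of_dvd_lt_two_mul (Nat.dvd_of_mod_eq_zero h3) (by omega) (by omega)
    omega
  -- split into T1 + T2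
  have hsplit : (∑ u ∈ Ico 1 m, (u : ℚ) * ffFn m (u * j % m))
      - ∑ u ∈ Ico 1 m, (u : ℚ) * ffFn m (u * (m - j) % m)
      = (∑ u ∈ Ico 1 m, (u : ℚ) * (((u * j % m : ℕ) : ℚ)
            - ((u * (m - j) % m : ℕ) : ℚ)) / m)
        + ∑ u ∈ Ico 1 m, (u : ℚ) * (chiFn m (u * j % m) - chiFn m (u * (m - j) % m)) := by
    rw [← Finset.sum_sub_distrib, ← Finset.sum_add_distrib]
    apply Finset.sum_congr rfl
    intro u hu
    unfold ffFn
    ring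
  rw [hsplit]
  -- T2 : the chi part
  obtain ⟨t, -, ht⟩ := Nat.exists_mul_mod_eq_one_of_coprime hc hm
  set ub := t % m with hub_def
  have hub : ub * j % m = 1 := by
    rw [hub_def, Nat.mod_mul_mod, mul_comm, ht]
  have hub_mem : ub ∈ Ico 1 m := by
    simp only [mem_Ico]
    refine ⟨?_, Nat.mod_lt _ hm0⟩
    rcases Nat.eq_zero_or_pos ub with h | h
    · rw [h, zero_mul, Nat.zero_mod] at hub; omega
    · exact h
  set ua := (m - 1) * t % m with hua_def
  have hua : ua * j % m = m - 1 := by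
    rw [hua_def, Nat.mod_mul_mod, mul_assoc, ← Nat.mul_mod_mod, mul_comm t j, ht, mul_one,
      Nat.mod_eq_of_lt (by omega)]
  have hua_mem : ua ∈ Ico 1 m := by
    simp only [mem_Ico]
    refine ⟨?_, Nat.mod_lt _ hm0⟩
    rcases Nat.eq_zero_or_pos ua with h | h
    · rw [h, zero_mul, Nat.zero_mod] at hua; omega
    · exact h
  have hab : ua + ub = m := by
    have hminus : m - 1 + 1 = m := by omega
    have h0 : (ua + ub) * j % m = 0 := by
      rw [add_mul, Nat.add_mod, hua, hub, hminus, Nat.mod_self]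
    have hdvd : m ∣ (ua + ub) * j := Nat.dvd_of_mod_eq_zero h0
    have hmj : Nat.Coprime m j := by rwa [Nat.Coprime, Nat.gcd_comm]
    have hdvd2 : m ∣ ua + ub := hmj.dvd_of_dvd_mul_right hdvd
    simp only [mem_Ico] at hua_mem hub_mem
    exact eq_of_dvd_lt_two_mul hdvd2 (by omega) (by omega)
  have hchi : ∀ u ∈ Ico 1 m, (u : ℚ) * (chiFn m (u * j % m) - chiFn m (u * (m - j) % m))
      = (if u * j % m = 1 then (u : ℚ) else 0)
        - (if u * j % m = m - 1 then (u : ℚ) else 0) := by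
    intro u hu
    have h2 := mod_mem_Ico hm0 hc hu
    simp only [mem_Ico] at h2
    rw [key1 u hu]
    unfold chiFn
    have e1 : ((u * j % m + 1) % m = 0) ↔ (u * j % m = m - 1) := by
      constructor
      · intro h
        have hd := Nat.dvd_of_mod_eq_zero h
        have := Nat.le_of_dvd (by omega) hd
        omega
      · intro h
        have h5 : u * j % m + 1 = m := by omega
        rw [h5, Nat.mod_self]
    have e2 : ((m - u * j % m + 1) % m = 0) ↔ (u * j % m = 1) := by
      constructor
      · intro h
        have hd := Nat.dvd_of_mod_eq_zero h
        have := Nat.le_of_dvd (by omega) hd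
        omega
      · intro h
        have h5 : m - u * j % m + 1 = m := by omega
        rw [h5, Nat.mod_self]
    simp only [e1, e2]
    rcases eq_or_ne (u * j % m) 1 with h1 | h1 <;>
      rcases eq_or_ne (u * j % m) (m - 1) with h3 | h3
    · have h13 : (1 : ℕ) = m - 1 := by omega
      simp [h1, h3, ← h13]
    · have hne : ¬((1 : ℕ) = m - 1) := by omega
      simp [h1, h3, hne]
    · have hne : ¬(m - 1 = 1) := by omega
      simp [h1, h3, hne]
    · simp [h1, h3]
  have hs1 : ∑ u ∈ Ico 1 m, (if u * j % m = 1 then (u : ℚ) else 0) = (ub : ℚ) := by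
    rw [Finset.sum_eq_single_of_mem ub hub_mem, if_pos hub]
    intro w hw hne
    apply if_neg
    intro hcon
    simp only [mem_Ico] at hw hub_mem
    exact hne (mod_inj hc hw.2 hub_mem.2 (hcon.trans hub.symm))
  have hs2 : ∑ u ∈ Ico 1 m, (if u * j % m = m - 1 then (u : ℚ) else 0) = (ua : ℚ) := by
    rw [Finset.sum_eq_single_of_mem ua hua_mem, if_pos hua]
    intro w hw hne
    apply if_neg
    intro hcon
    simp only [mem_Ico] at hw hua_mem
    exact hne (mod_inj hc hw.2 hua_mem.2 (hcon.trans hua.symm))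
  have hT2 : ∑ u ∈ Ico 1 m, (u : ℚ) * (chiFn m (u * j % m) - chiFn m (u * (m - j) % m))
      = (ub : ℚ) - (ua : ℚ) := by
    rw [Finset.sum_congr rfl hchi, Finset.sum_sub_distrib, hs1, hs2]
  -- T1 : the fractional part
  set S := ∑ u ∈ Ico 1 m, (((u : ℚ) - m / 2) * (((u * j % m : ℕ) : ℚ) - m / 2)) with hS_def
  have hVsum : ∑ u ∈ Ico 1 m, ((u * j % m : ℕ) : ℚ) = ∑ u ∈ Ico 1 m, (u : ℚ) :=
    sum_Ico_mul_mod m j hm hc (fun v => (v : ℚ))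
  have hT1 : ∑ u ∈ Ico 1 m, (u : ℚ) * (((u * j % m : ℕ) : ℚ)
        - ((u * (m - j) % m : ℕ) : ℚ)) / m
      = 2 * S / m := by
    have hcong2 : ∀ u ∈ Ico 1 m, (u : ℚ) * (((u * j % m : ℕ) : ℚ)
          - ((u * (m - j) % m : ℕ) : ℚ)) / m
        = (u : ℚ) * (2 * ((u * j % m : ℕ) : ℚ) - m) / m := by
      intro u hu
      have h2 := mod_mem_Ico hm0 hc hu
      simp only [mem_Ico] at h2
      rw [key1 u hu, Nat.cast_sub (le_of_lt h2.2)]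
      ring
    rw [Finset.sum_congr rfl hcong2]
    have hmain : ∑ u ∈ Ico 1 m, (u : ℚ) * (2 * ((u * j % m : ℕ) : ℚ) - m) = 2 * S := by
      have hexp : ∀ u ∈ Ico 1 m, (u : ℚ) * (2 * ((u * j % m : ℕ) : ℚ) - m)
          = 2 * (((u : ℚ) - m / 2) * (((u * j % m : ℕ) : ℚ) - m / 2))
            + (m : ℚ) * ((u * j % m : ℕ) : ℚ) - (m : ℚ) ^ 2 / 2 := by
        intro u _; ring
      rw [Finset.sum_congr rfl hexp, Finset.sum_sub_distrib, Finset.sum_add_distrib,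
        ← Finset.mul_sum, ← Finset.mul_sum, hVsum, sum_Ico_cast m hm0, Finset.sum_const,
        Nat.card_Ico, nsmul_eq_mul]
      have hcast : ((m - 1 : ℕ) : ℚ) = (m : ℚ) - 1 := by
        rw [Nat.cast_sub (by omega)]; simp
      rw [hcast, hS_def]
      ring
    rw [← Finset.sum_div, hmain]
  rw [hT1, hT2]
  -- Cauchy-Schwarz bound on S
  set Q := ∑ u ∈ Ico 1 m, ((u : ℚ) - m / 2) ^ 2 with hQ_def
  have hQv : ∑ u ∈ Ico 1 m, (((u * j % m : ℕ) : ℚ) - m / 2) ^ 2 = Q :=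
    sum_Ico_mul_mod m j hm hc (fun v => ((v : ℚ) - m / 2) ^ 2)
  have hCS : S ^ 2 ≤ Q ^ 2 := by
    have h := Finset.sum_mul_sq_le_sq_mul_sq (Ico 1 m) (fun u => (u : ℚ) - m / 2)
      (fun u => ((u * j % m : ℕ) : ℚ) - m / 2)
    rw [hQv] at h
    calc S ^ 2 ≤ Q * Q := h
      _ = Q ^ 2 := (sq Q).symm
  have hQnn : (0 : ℚ) ≤ Q := Finset.sum_nonneg fun u _ => sq_nonneg _
  have hSabs : |S| ≤ Q := by
    rw [abs_le]; constructor <;> nlinarith [hCS, hQnn]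
  have hQval : Q = (m : ℚ) * ((m : ℚ) - 1) * ((m : ℚ) - 2) / 12 := by
    have h0 : ∑ u ∈ range m, ((u : ℚ) - m / 2) ^ 2 = ((0 : ℚ) - m / 2) ^ 2 + Q := by
      rw [Finset.range_eq_Ico, Finset.sum_eq_sum_Ico_succ_bot hm0, hQ_def]
      norm_num
    have h1 : ∑ u ∈ range m, ((u : ℚ) - m / 2) ^ 2
        = (m : ℚ) * ((m : ℚ) - 1) * (2 * (m : ℚ) - 1) / 6
          - (m : ℚ) * ((m : ℚ) * ((m : ℚ) - 1) / 2) + (m : ℚ) * ((m : ℚ) ^ 2 / 4) := by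
      have hexp : ∀ u ∈ range m, ((u : ℚ) - m / 2) ^ 2
          = (u : ℚ) ^ 2 - (m : ℚ) * (u : ℚ) + (m : ℚ) ^ 2 / 4 := by
        intro u _; ring
      rw [Finset.sum_congr rfl hexp, Finset.sum_add_distrib, Finset.sum_sub_distrib,
        ← Finset.mul_sum, sum_range_cast, sum_range_cast_sq, Finset.sum_const, card_range,
        nsmul_eq_mul]
    linear_combination h1 - h0
  -- final assembly
  have hmpos : (0 : ℚ) < (m : ℚ) := by exact_mod_cast hm0
  have hubq1 : (1 : ℚ) ≤ (ub : ℚ) := by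
    simp only [mem_Ico] at hub_mem; exact_mod_cast hub_mem.1
  have hubq2 : (ub : ℚ) + 1 ≤ (m : ℚ) := by
    simp only [mem_Ico] at hub_mem; exact_mod_cast hub_mem.2
  have huab : (ua : ℚ) + (ub : ℚ) = (m : ℚ) := by exact_mod_cast hab
  have hpart2 : |(ub : ℚ) - (ua : ℚ)| ≤ (m : ℚ) - 2 := by
    rw [abs_le]; constructor <;> linarith
  have hpart1 : |2 * S / m| ≤ ((m : ℚ) - 1) * ((m : ℚ) - 2) / 6 := by
    rw [abs_div, abs_of_pos hmpos, abs_mul, abs_two, div_le_iff₀ hmpos]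
    have := hSabs
    rw [hQval] at this
    nlinarith [this]
  calc |2 * S / m + ((ub : ℚ) - (ua : ℚ))| ≤ |2 * S / m| + |(ub : ℚ) - (ua : ℚ)| := abs_add_le _ _
    _ ≤ ((m : ℚ) - 1) * ((m : ℚ) - 2) / 6 + ((m : ℚ) - 2) := add_le_add hpart1 hpart2

private def Wq (N i : ℕ) : ℚ :=
  ∑ k ∈ Icc 1 (N - 1), (k : ℚ) * (Int.fract ((k : ℚ) * (i : ℚ) / (N : ℚ)) + sigmaFn N k i)

private lemma Wq_key (N s i : ℕ) (hN : 2 ≤ N) (hdvd : s ∣ N) (hsne : s ≠ N)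
    (hi1 : 1 ≤ i) (hi2 : i ≤ N - 1) (hg : Nat.gcd i N = s) :
    |Wq N i - Wq N (N - i)| ≤ ((N : ℚ) - 2 * (s : ℚ)) * ((N : ℚ) / (s : ℚ) + 5) / 6 := by
  have hs0 : s ≠ 0 := by rintro rfl; rw [zero_dvd_iff] at hdvd; omega
  have hspos : 0 < s := by omega
  obtain ⟨m, hNm⟩ := hdvd
  have hm2 : 2 ≤ m := by
    by_contra hlt
    interval_cases m
    · rw [mul_zero] at hNm; omega
    · rw [mul_one] at hNm; exact hsne hNm.symm
  have hsj : s ∣ i := hg ▸ Nat.gcd_dvd_left i N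
  obtain ⟨j, hij⟩ := hsj
  have hj1 : 1 ≤ j := by
    rcases Nat.eq_zero_or_pos j with h | h
    · rw [h, mul_zero] at hij; omega
    · exact h
  have hiN : i < N := by omega
  have hjm : j < m := by
    by_contra h
    push_neg at h
    have hle : s * m ≤ s * j := Nat.mul_le_mul_left s h
    rw [← hNm, ← hij] at hle
    omega
  have hjdiv : i / s = j := by rw [hij, Nat.mul_div_cancel_left _ hspos]
  have hmdiv : N / s = m := by rw [hNm, Nat.mul_div_cancel_left _ hspos]
  have hcj : Nat.gcd j m = 1 := by
    have h := Nat.coprime_div_gcd_div_gcd (m := i) (n := N) (by rw [hg]; exact hspos)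
    rw [hg, hjdiv, hmdiv] at h
    exact h
  have hcj' : Nat.gcd (m - j) m = 1 := by rw [Nat.gcd_self_sub_left hjm.le]; exact hcj
  have hgcd' : Nat.gcd (N - i) N = s := by rw [Nat.gcd_self_sub_left hiN.le]; exact hg
  have hNi : N - i = s * (m - j) := by
    have h1 : s * (m - j) + s * j = s * m := by rw [← Nat.mul_add, Nat.sub_add_cancel hjm.le]
    rw [← hij, ← hNm] at h1
    omega
  -- convert the W-sums to range-N sums of ffFn
  have hconv : ∀ i' j' : ℕ, i' = s * j' → Nat.gcd i' N = s →
      Wq N i' = ∑ k ∈ range N, (k : ℚ) * ffFn m (k * j' % m) := by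
    intro i' j' hij' hg'
    have hpt : ∀ k : ℕ, (k : ℚ) * (Int.fract ((k : ℚ) * (i' : ℚ) / (N : ℚ)) + sigmaFn N k i')
        = (k : ℚ) * ffFn m (k * j' % m) := by
      intro k
      congr 1
      have hfr : Int.fract ((k : ℚ) * (i' : ℚ) / (N : ℚ)) = ((k * i' % N : ℕ) : ℚ) / N := by
        rw [← Nat.cast_mul, Int.fract_div_natCast_eq_div_natCast_mod]
      have hmod : k * i' % N = s * (k * j' % m) := by
        rw [hij', hNm, show k * (s * j') = s * (k * j') by ring, Nat.mul_mod_mul_left]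
      have hsig : sigmaFn N k i' = chiFn m (k * j' % m) := by
        unfold sigmaFn chiFn
        rw [hg']
        have h1m : 1 % m = 1 := Nat.mod_eq_of_lt (by omega)
        have hcond : (k * i' + s) % N = s * ((k * j' % m + 1) % m) := by
          rw [hij', hNm, show k * (s * j') + s = s * (k * j' + 1) by ring,
            Nat.mul_mod_mul_left]
          congr 1
          conv_lhs => rw [Nat.add_mod]
          rw [h1m]
        rw [hcond]
        have hiff : (s * ((k * j' % m + 1) % m) = 0) ↔ ((k * j' % m + 1) % m = 0) := by
          constructor
          · intro h
            rcases Nat.mul_eq_zero.mp h with h | h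
            · omega
            · exact h
          · intro h; rw [h, mul_zero]
        simp only [hiff]
      rw [hfr, hmod, hsig]
      unfold ffFn
      congr 1
      have hscast : ((s * (k * j' % m) : ℕ) : ℚ) = (s : ℚ) * ((k * j' % m : ℕ) : ℚ) := by
        push_cast; ring
      have hNcast : (N : ℚ) = (s : ℚ) * (m : ℚ) := by rw [hNm]; push_cast; ring
      rw [hscast, hNcast]
      exact mul_div_mul_left _ _ (by exact_mod_cast hs0)
    have hsub : Icc 1 (N - 1) ⊆ range N := by
      intro k hk; simp only [mem_Icc, mem_range] at *; omega
    unfold Wq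
    calc ∑ k ∈ Icc 1 (N - 1), (k : ℚ) * (Int.fract ((k : ℚ) * (i' : ℚ) / (N : ℚ)) + sigmaFn N k i')
        = ∑ k ∈ Icc 1 (N - 1), (k : ℚ) * ffFn m (k * j' % m) :=
          Finset.sum_congr rfl (fun k _ => hpt k)
      _ = ∑ k ∈ range N, (k : ℚ) * ffFn m (k * j' % m) := by
          apply Finset.sum_subset hsub
          intro k hk hnk
          have hk0 : k = 0 := by simp only [mem_range, mem_Icc] at *; omega
          rw [hk0]; simp
  -- periodic splitting
  have hper : ∀ j' : ℕ, ∑ k ∈ range N, (k : ℚ) * ffFn m (k * j' % m)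
      = (m : ℚ) * (∑ q ∈ range s, (q : ℚ)) * (∑ u ∈ range m, ffFn m (u * j' % m))
        + (s : ℚ) * ∑ u ∈ range m, (u : ℚ) * ffFn m (u * j' % m) := by
    intro j'
    have h := sum_range_mul_periodic m (fun v => ffFn m (v * j' % m)) s
    rw [← hNm] at h
    have hpt : ∀ k ∈ range N, (k : ℚ) * ffFn m (k % m * j' % m)
        = (k : ℚ) * ffFn m (k * j' % m) := by
      intro k _; rw [Nat.mod_mul_mod]
    rw [Finset.sum_congr rfl hpt] at h
    exact h
  have hH : ∀ j'' : ℕ, Nat.gcd j'' m = 1 →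
      ∑ u ∈ range m, ffFn m (u * j'' % m) = ∑ u ∈ range m, ffFn m u := by
    intro j'' hco
    rw [Finset.range_eq_Ico, Finset.sum_eq_sum_Ico_succ_bot (by omega : 0 < m),
      Finset.sum_eq_sum_Ico_succ_bot (by omega : 0 < m),
      show 0 * j'' % m = 0 by simp]
    congr 1
    exact sum_Ico_mul_mod m j'' hm2 hco (ffFn m)
  rw [hconv i j hij hg, hconv (N - i) (m - j) hNi hgcd', hper j, hper (m - j),
    hH j hcj, hH (m - j) hcj']
  have hsq : (0 : ℚ) ≤ (s : ℚ) := by positivity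
  rw [show ((m : ℚ) * (∑ q ∈ range s, (q : ℚ)) * (∑ u ∈ range m, ffFn m u)
        + (s : ℚ) * ∑ u ∈ range m, (u : ℚ) * ffFn m (u * j % m))
      - ((m : ℚ) * (∑ q ∈ range s, (q : ℚ)) * (∑ u ∈ range m, ffFn m u)
        + (s : ℚ) * ∑ u ∈ range m, (u : ℚ) * ffFn m (u * (m - j) % m))
      = (s : ℚ) * ((∑ u ∈ range m, (u : ℚ) * ffFn m (u * j % m))
          - ∑ u ∈ range m, (u : ℚ) * ffFn m (u * (m - j) % m)) from by ring,
    abs_mul, abs_of_nonneg hsq]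
  have hbound := P_diff_bound m j hm2 hj1 hjm hcj
  have hNcast : (N : ℚ) = (s : ℚ) * (m : ℚ) := by rw [hNm]; push_cast; ring
  have hdivN : (N : ℚ) / (s : ℚ) = (m : ℚ) := by
    rw [hNcast, mul_comm, mul_div_assoc, div_self (by exact_mod_cast hs0 : (s:ℚ) ≠ 0), mul_one]
  rw [hdivN, hNcast]
  calc (s : ℚ) * |(∑ u ∈ range m, (u : ℚ) * ffFn m (u * j % m))
        - ∑ u ∈ range m, (u : ℚ) * ffFn m (u * (m - j) % m)|
      ≤ (s : ℚ) * (((m : ℚ) - 1) * ((m : ℚ) - 2) / 6 + ((m : ℚ) - 2)) :=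
        mul_le_mul_of_nonneg_left hbound hsq
    _ = ((s : ℚ) * (m : ℚ) - 2 * (s : ℚ)) * ((m : ℚ) + 5) / 6 := by ring

/-- For every `(g,n)`-admissible datum, its twin, and every proper
divisor `σ` of `N`,
`|a_σ(Y) − a_σ(Y')| ≤ ((N − 2σ)(N/σ + 5))/(6N) · Σ_{gcd(i,N)=σ} d_i`. -/
theorem abs_ageSigma_sub_le (g n g' N : ℕ) (d a : ℕ → ℕ) (s : ℕ)
    (hgn : 2 < 2 * g + n) (hadm : Admissible g n g' N d a)
    (hdvd : s ∣ N) (hne : s ≠ N) :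
    |ageSigma N s d - ageSigma N s (twin N d)|
      ≤ ((N : ℚ) - 2 * (s : ℚ)) * ((N : ℚ) / (s : ℚ) + 5) / (6 * (N : ℚ))
        * ∑ i ∈ (Icc 1 (N - 1)).filter (fun i => Nat.gcd i N = s), (d i : ℚ) := by
  have hN : 2 ≤ N := hadm.1
  have hs0 : s ≠ 0 := by rintro rfl; rw [zero_dvd_iff] at hdvd; omega
  have hNq : (0 : ℚ) < (N : ℚ) := by exact_mod_cast (by omega : 0 < N)
  have hmem : ∀ a ∈ (Icc 1 (N - 1)).filter (fun i => Nat.gcd i N = s),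
      N - a ∈ (Icc 1 (N - 1)).filter (fun i => Nat.gcd i N = s) := by
    intro a ha
    simp only [Finset.mem_filter, Finset.mem_Icc] at *
    refine ⟨⟨by omega, by omega⟩, ?_⟩
    rw [Nat.gcd_self_sub_left (by omega : a ≤ N)]
    exact ha.2
  have hAS : ageSigma N s d = (1 / (N : ℚ)) *
      ∑ i ∈ (Icc 1 (N - 1)).filter (fun i => Nat.gcd i N = s), (d i : ℚ) * Wq N i := rfl
  have htwin : ageSigma N s (twin N d) = (1 / (N : ℚ)) *
      ∑ i ∈ (Icc 1 (N - 1)).filter (fun i => Nat.gcd i N = s), (d i : ℚ) * Wq N (N - i) := by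
    simp only [ageSigma, twin]
    congr 1
    refine Finset.sum_nbij' (fun i => N - i) (fun i => N - i) hmem hmem ?_ ?_ ?_
    · intro a ha
      simp only [Finset.mem_filter, Finset.mem_Icc] at ha
      show N - (N - a) = a
      omega
    · intro a ha
      simp only [Finset.mem_filter, Finset.mem_Icc] at ha
      show N - (N - a) = a
      omega
    · intro a ha
      simp only [Finset.mem_filter, Finset.mem_Icc] at ha
      rw [show N - (N - a) = a from by omega]
      rfl
  rw [hAS, htwin, ← mul_sub, ← Finset.sum_sub_distrib]
  rw [Finset.sum_congr rfl (fun i (_ : i ∈ (Icc 1 (N - 1)).filter (fun i => Nat.gcd i N = s)) =>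
    show (d i : ℚ) * Wq N i - (d i : ℚ) * Wq N (N - i)
      = (d i : ℚ) * (Wq N i - Wq N (N - i)) from by ring)]
  rw [abs_mul, abs_of_pos (by positivity : (0 : ℚ) < 1 / (N : ℚ))]
  have hble : |∑ i ∈ (Icc 1 (N - 1)).filter (fun i => Nat.gcd i N = s),
        (d i : ℚ) * (Wq N i - Wq N (N - i))|
      ≤ ∑ i ∈ (Icc 1 (N - 1)).filter (fun i => Nat.gcd i N = s),
        (d i : ℚ) * (((N : ℚ) - 2 * (s : ℚ)) * ((N : ℚ) / (s : ℚ) + 5) / 6) := by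
    refine (Finset.abs_sum_le_sum_abs _ _).trans (Finset.sum_le_sum ?_)
    intro i hi
    rw [abs_mul, Nat.abs_cast]
    refine mul_le_mul_of_nonneg_left ?_ (Nat.cast_nonneg _)
    simp only [Finset.mem_filter, Finset.mem_Icc] at hi
    exact Wq_key N s i hN hdvd hne hi.1.1 hi.1.2 hi.2
  calc (1 / (N : ℚ)) * |∑ i ∈ (Icc 1 (N - 1)).filter (fun i => Nat.gcd i N = s),
        (d i : ℚ) * (Wq N i - Wq N (N - i))|
      ≤ (1 / (N : ℚ)) * ∑ i ∈ (Icc 1 (N - 1)).filter (fun i => Nat.gcd i N = s),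
        (d i : ℚ) * (((N : ℚ) - 2 * (s : ℚ)) * ((N : ℚ) / (s : ℚ) + 5) / 6) :=
        mul_le_mul_of_nonneg_left hble (by positivity)
    _ = ((N : ℚ) - 2 * (s : ℚ)) * ((N : ℚ) / (s : ℚ) + 5) / (6 * (N : ℚ))
        * ∑ i ∈ (Icc 1 (N - 1)).filter (fun i => Nat.gcd i N = s), (d i : ℚ) := by
        rw [← Finset.sum_mul]
        ring
end

section
/- Let N ≥ 2 and let σ be a proper divisor of N (σ | N, σ ≠ N). Then |Σ_{k=1}^{N−1} k·({σk/N} − {(N−σ)k/N})| = (1/6)(N/σ − 1)(N − 2σ). -/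
open Finset

private lemma sum_id_q (n : ℕ) : ∑ r ∈ range n, (r : ℚ) = n * (n - 1) / 2 := by
  induction n with
  | zero => simp
  | succ n ih => rw [sum_range_succ, ih]; push_cast; ring

private lemma sum_sq_q (n : ℕ) : ∑ r ∈ range n, (r : ℚ) ^ 2 = n * (n - 1) * (2 * n - 1) / 6 := by
  induction n with
  | zero => simp
  | succ n ih => rw [sum_range_succ, ih]; push_cast; ring

/-- For `N ≥ 2` and a proper divisor `σ` of `N`,
`|Σ_{k=1}^{N−1} k·({σk/N} − {(N−σ)k/N})| = (1/6)(N/σ − 1)(N − 2σ)`. -/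
theorem abs_sum_fract_diff_eq (N s : ℕ) (hN : 2 ≤ N) (hdvd : s ∣ N) (hne : s ≠ N) :
    |∑ k ∈ Finset.Icc 1 (N - 1), (k : ℚ) *
        (Int.fract ((s : ℚ) * (k : ℚ) / (N : ℚ))
          - Int.fract (((N : ℚ) - (s : ℚ)) * (k : ℚ) / (N : ℚ)))|
      = 1 / 6 * ((N : ℚ) / (s : ℚ) - 1) * ((N : ℚ) - 2 * (s : ℚ)) := by
  obtain ⟨m, rfl⟩ := hdvd
  have hs : 1 ≤ s := by
    rcases Nat.eq_zero_or_pos s with h | h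
    · subst h; simp at hN
    · exact h
  have hm : 2 ≤ m := by
    rcases Nat.lt_or_ge m 2 with h | h
    · interval_cases m <;> simp_all
    · exact h
  have hsQ : (s : ℚ) ≠ 0 := by positivity
  have hmQ2 : (2:ℚ) ≤ (m:ℚ) := by exact_mod_cast hm
  have hmQ : (m : ℚ) ≠ 0 := by linarith
  set f : ℕ → ℚ := fun k => (k : ℚ) *
        (Int.fract ((s : ℚ) * (k : ℚ) / ((s*m : ℕ) : ℚ))
          - Int.fract ((((s*m : ℕ) : ℚ) - (s : ℚ)) * (k : ℚ) / ((s*m : ℕ) : ℚ))) with hf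
  have h0 : ∑ k ∈ Finset.Icc 1 (s*m - 1), f k = ∑ k ∈ range (s*m), f k := by
    apply Finset.sum_subset
    · intro x hx
      simp only [mem_Icc] at hx
      simp only [mem_range]
      omega
    · intro x hx hx'
      simp only [mem_range] at hx
      simp only [mem_Icc] at hx'
      have : x = 0 := by omega
      subst this
      simp [hf]
  have h1 : ∑ k ∈ range (s*m), f k = ∑ p ∈ range s ×ˢ range m, f (p.1 * m + p.2) := by
    apply Finset.sum_nbij' (i := fun k => (k / m, k % m)) (j := fun p => p.1 * m + p.2)
    · intro a ha
      simp only [mem_range] at ha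
      simp only [mem_product, mem_range]
      exact ⟨Nat.div_lt_of_lt_mul (Nat.mul_comm s m ▸ ha), Nat.mod_lt _ (by omega)⟩
    · intro p hp
      simp only [mem_product, mem_range] at hp
      simp only [mem_range]
      calc p.1 * m + p.2 < p.1 * m + m := by omega
        _ = (p.1 + 1) * m := by ring
        _ ≤ s * m := Nat.mul_le_mul_right m (by omega)
    · intro a _
      exact Nat.div_add_mod' a m
    · intro p hp
      simp only [mem_product, mem_range] at hp
      ext
      · simp only
        rw [Nat.add_comm, Nat.add_mul_div_right _ _ (by omega : 0 < m),
          Nat.div_eq_of_lt hp.2, Nat.zero_add]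
      · simp only
        rw [Nat.add_comm, Nat.add_mul_mod_self_right, Nat.mod_eq_of_lt hp.2]
    · intro a _
      congr 1
      exact (Nat.div_add_mod' a m).symm
  have hterm : ∀ q ∈ range s, ∀ r ∈ range m,
      f (q * m + r) = ((q:ℚ) * m + r) * (2 * r / m - 1) + (if r = 0 then (q:ℚ)*m else 0) := by
    intro q hq r hr
    simp only [mem_range] at hq hr
    have hfr1 : (s : ℚ) * ((q*m+r : ℕ) : ℚ) / ((s*m : ℕ) : ℚ) = ((q : ℤ) : ℚ) + (r : ℚ) / m := by
      push_cast
      field_simp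
    have hfr2 : (((s*m : ℕ) : ℚ) - (s : ℚ)) * ((q*m+r : ℕ) : ℚ) / ((s*m : ℕ) : ℚ)
        = (((q*m + r - q : ℤ)) : ℚ) + -((r : ℚ) / m) := by
      push_cast
      field_simp
      ring
    have hfrac : Int.fract ((r : ℚ) / m) = (r : ℚ) / m := by
      rw [Int.fract_eq_self]
      constructor
      · positivity
      · rw [div_lt_one (by linarith)]
        exact_mod_cast hr
    simp only [hf]
    rw [hfr1, hfr2, Int.fract_intCast_add, Int.fract_intCast_add, hfrac]
    rcases eq_or_ne r 0 with hr0 | hr0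
    · subst hr0
      simp
    · have hrQ : (0:ℚ) < (r:ℚ) := by exact_mod_cast Nat.pos_of_ne_zero hr0
      rw [Int.fract_neg (by rw [hfrac]; positivity), hfrac]
      simp only [hr0, if_false, add_zero]
      push_cast
      ring
  have hS : ∑ k ∈ Finset.Icc 1 (s*m - 1), f k = (s:ℚ) * ((m:ℚ)-1) * ((m:ℚ)-2) / 6 := by
    rw [h0, h1, Finset.sum_product,
      Finset.sum_congr rfl (fun q hq => Finset.sum_congr rfl (fun r hr => hterm q hq r hr))]
    have e1 : ∀ q ∈ range s,
        (∑ r ∈ range m, (((q:ℚ) * m + r) * (2 * r / m - 1) + (if r = 0 then (q:ℚ)*m else 0)))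
        = ((m:ℚ)-1) * ((m:ℚ)-2) / 6 := by
      intro q _
      have e2 : ∀ r ∈ range m, (((q:ℚ) * m + r) * (2 * r / m - 1) + (if r = 0 then (q:ℚ)*m else 0))
          = ((2/(m:ℚ)) * (r:ℚ)^2 + (2*(q:ℚ)-1) * (r:ℚ) - (q:ℚ)*m) + (if r = 0 then (q:ℚ)*m else 0) := by
        intro r _
        congr 1
        field_simp
        ring
      rw [Finset.sum_congr rfl e2, Finset.sum_add_distrib,
        Finset.sum_ite_eq' (range m) 0 (fun _ => (q:ℚ)*m)]
      rw [if_pos (Finset.mem_range.2 (by omega : 0 < m))]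
      rw [Finset.sum_sub_distrib, Finset.sum_add_distrib, Finset.sum_const, card_range,
        nsmul_eq_mul, ← Finset.mul_sum, ← Finset.mul_sum, sum_sq_q, sum_id_q]
      field_simp
      ring
    rw [Finset.sum_congr rfl e1, Finset.sum_const, card_range, nsmul_eq_mul]
    ring
  rw [hS, abs_of_nonneg (by
    apply div_nonneg _ (by norm_num)
    apply mul_nonneg (mul_nonneg (by positivity) (by linarith)) (by linarith))]
  push_cast
  field_simp
end

section
/- Let N ≥ 2, let σ be a proper divisor of N, and let i with 1 ≤ i ≤ N − 1 satisfy gcd(i,N) = σ. Then |Σ_{k=1}^{N−1} k·(σ(k,i) − σ(k,N−i))| ≤ N − 2σ, and the maximum value N − 2σ is attained exactly when i = σ or i = N − σ. -/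
open Finset

lemma filter_eq_image' (N n' s c : ℕ) (hs : 0 < s) (hn' : 0 < n') (hN : N = s * n')
    (hc1 : 1 ≤ c) (hc2 : c < n')
    (P : ℕ → Prop) [DecidablePred P] (hP : ∀ k, P k ↔ k % n' = c) :
    (Finset.Icc 1 (N-1)).filter P = (Finset.range s).image (fun j => c + j * n') := by
  ext k
  simp only [Finset.mem_filter, Finset.mem_Icc, Finset.mem_image, Finset.mem_range, hP]
  constructor
  · rintro ⟨⟨h1, h2⟩, h3⟩
    refine ⟨k / n', ?_, ?_⟩
    · rw [Nat.div_lt_iff_lt_mul hn']; omega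
    · have h4 := Nat.mod_add_div k n'
      have h5 : n' * (k / n') = (k / n') * n' := Nat.mul_comm _ _
      omega
  · rintro ⟨j, hj, rfl⟩
    have h1 : j * n' ≤ (s-1) * n' := Nat.mul_le_mul_right _ (by omega)
    have h2 : (s-1) * n' + n' = s * n' := by
      have : s - 1 + 1 = s := by omega
      calc (s-1) * n' + n' = (s - 1 + 1) * n' := by ring
        _ = s * n' := by rw [this]
    have h3 : (c + j * n') % n' = c := by
      rw [Nat.add_mul_mod_self_right, Nat.mod_eq_of_lt hc2]
    exact ⟨⟨by omega, by omega⟩, h3⟩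


lemma sum_image' (s n' c : ℕ) (hn' : 0 < n') :
    ∑ k ∈ (Finset.range s).image (fun j => c + j * n'), (k:ℚ)
      = s * c + ∑ j ∈ Finset.range s, (j:ℚ) * n' := by
  rw [Finset.sum_image]
  · push_cast
    rw [Finset.sum_add_distrib, Finset.sum_const, Finset.card_range]
    push_cast; ring
  · intro a _ b _ h
    have : a * n' = b * n' := by beta_reduce at h; omega
    exact Nat.eq_of_mul_eq_mul_right hn' this

/-- For `N ≥ 2`, a proper divisor `σ` of `N`, and `1 ≤ i ≤ N−1` with
`gcd(i,N) = σ`, `|Σ_{k=1}^{N−1} k·(σ(k,i) − σ(k,N−i))| ≤ N − 2σ`, with equality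
exactly when `i = σ` or `i = N − σ`. -/
theorem abs_sum_sigma_diff_le (N s i : ℕ) (hN : 2 ≤ N) (hdvd : s ∣ N) (hne : s ≠ N)
    (hi1 : 1 ≤ i) (hi2 : i ≤ N - 1) (hgcd : Nat.gcd i N = s) :
    |∑ k ∈ Finset.Icc 1 (N - 1), (k : ℚ) * (sigmaFn N k i - sigmaFn N k (N - i))|
      ≤ (N : ℚ) - 2 * (s : ℚ) ∧
    (|∑ k ∈ Finset.Icc 1 (N - 1), (k : ℚ) * (sigmaFn N k i - sigmaFn N k (N - i))|
        = (N : ℚ) - 2 * (s : ℚ) ↔ i = s ∨ i = N - s) := by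
  -- basic setup
  have hN0 : 0 < N := by omega
  have hs0 : 0 < s := hgcd ▸ Nat.gcd_pos_of_pos_right _ hN0
  set n' := N / s with hn'def
  set i' := i / s with hi'def
  have hNeq : N = s * n' := by rw [hn'def, Nat.mul_div_cancel' hdvd]
  have hsdvdi : s ∣ i := hgcd ▸ Nat.gcd_dvd_left _ _
  have hieq : i = s * i' := by rw [hi'def, Nat.mul_div_cancel' hsdvdi]
  have hcop : Nat.Coprime i' n' := by
    rw [hi'def, hn'def, ← hgcd]
    exact Nat.coprime_div_gcd_div_gcd (hgcd ▸ hs0)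
  have hn'2 : 2 ≤ n' := by
    rcases Nat.lt_or_ge n' 2 with h | h
    · exfalso
      interval_cases n' <;> omega
    · exact h
  have hi'1 : 1 ≤ i' := by
    rcases Nat.eq_zero_or_pos i' with h | h
    · rw [h, Nat.mul_zero] at hieq; omega
    · exact h
  have hi'lt : i' < n' := by
    have : s * i' ≤ N - 1 := hieq ▸ hi2
    by_contra h
    push_neg at h
    have : s * n' ≤ s * i' := Nat.mul_le_mul_left _ h
    omega
  haveI : NeZero n' := ⟨by omega⟩
  haveI : Fact (1 < n') := ⟨by omega⟩
  -- the inverse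
  have hunit : (i' : ZMod n') * (i' : ZMod n')⁻¹ = 1 := ZMod.coe_mul_inv_eq_one _ hcop
  set x : ZMod n' := -(i' : ZMod n')⁻¹ with hxdef
  have hinv_ne : (i' : ZMod n')⁻¹ ≠ 0 := by
    intro h
    rw [h, mul_zero] at hunit
    exact zero_ne_one hunit
  have hx0 : x ≠ 0 := by simpa [hxdef] using hinv_ne
  set c := x.val with hcdef
  have hc_lt : c < n' := ZMod.val_lt x
  have hc1 : 1 ≤ c := by
    rcases Nat.eq_zero_or_pos c with h | h
    · exact absurd ((ZMod.val_eq_zero x).mp h) hx0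
    · exact h
  -- membership characterizations
  have hgcd2 : Nat.gcd (N - i) N = s := by
    rw [Nat.gcd_self_sub_left (by omega : i ≤ N), hgcd]
  have cast_iff : ∀ (k : ℕ) (y : ZMod n'), ((k : ZMod n') = y ↔ k % n' = y.val) := by
    intro k y
    constructor
    · intro h; rw [← ZMod.val_natCast, h]
    · intro h
      rw [← ZMod.natCast_mod, h, ZMod.natCast_zmod_val]
  have hA : ∀ k : ℕ, ((k * i + Nat.gcd i N) % N = 0) ↔ k % n' = c := by
    intro k
    rw [hgcd, ← cast_iff k x]
    have e1 : k * i + s = s * (k * i' + 1) := by rw [hieq]; ring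
    rw [← Nat.dvd_iff_mod_eq_zero, e1, hNeq, Nat.mul_dvd_mul_iff_left hs0,
        ← ZMod.natCast_eq_zero_iff]
    push_cast
    constructor
    · intro h
      have hk : (k : ZMod n') * i' = -1 := by linear_combination h
      calc (k : ZMod n') = k * ((i' : ZMod n') * (i' : ZMod n')⁻¹) := by rw [hunit, mul_one]
        _ = ((k : ZMod n') * i') * (i' : ZMod n')⁻¹ := by ring
        _ = x := by rw [hk, hxdef]; ring
    · intro h
      rw [h, hxdef]
      have h2 : (i' : ZMod n')⁻¹ * i' = 1 := by rw [mul_comm]; exact hunit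
      linear_combination -h2
  have hnegval : (-x).val = n' - c := by
    rw [ZMod.neg_val, if_neg hx0]
  have hB : ∀ k : ℕ, ((k * (N - i) + Nat.gcd (N - i) N) % N = 0) ↔ k % n' = n' - c := by
    intro k
    rw [hgcd2, ← hnegval, ← cast_iff k (-x)]
    rw [← Nat.dvd_iff_mod_eq_zero, ← Int.natCast_dvd_natCast]
    push_cast [Nat.cast_sub (by omega : i ≤ N)]
    have e1 : (k : ℤ) * ((N : ℤ) - i) + s = k * N + (s - k * i) := by ring
    rw [e1, dvd_add_right (⟨k, by ring⟩ : (N:ℤ) ∣ (k:ℤ) * N)]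
    have e2 : (s : ℤ) - k * i = s * (1 - k * i') := by rw [hieq]; push_cast; ring
    have e3 : (N : ℤ) = s * n' := by exact_mod_cast hNeq
    rw [e2, e3, mul_dvd_mul_iff_left (by exact_mod_cast hs0.ne' : (s:ℤ) ≠ 0),
        ← ZMod.intCast_zmod_eq_zero_iff_dvd]
    push_cast
    constructor
    · intro h
      have hk : (k : ZMod n') * i' = 1 := by linear_combination -h
      calc (k : ZMod n') = k * ((i' : ZMod n') * (i' : ZMod n')⁻¹) := by rw [hunit, mul_one]
        _ = ((k : ZMod n') * i') * (i' : ZMod n')⁻¹ := by ring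
        _ = -x := by rw [hk, hxdef]; ring
    · intro h
      rw [h, hxdef]
      have h2 : (i' : ZMod n')⁻¹ * i' = 1 := by rw [mul_comm]; exact hunit
      linear_combination -h2
  -- compute the sum
  have hsum : ∑ k ∈ Finset.Icc 1 (N - 1), (k : ℚ) * (sigmaFn N k i - sigmaFn N k (N - i))
      = (N : ℚ) - 2 * s * c := by
    have step : ∀ k ∈ Finset.Icc 1 (N-1), (k : ℚ) * (sigmaFn N k i - sigmaFn N k (N - i))
        = (if k % n' = n' - c then (k:ℚ) else 0) - (if k % n' = c then (k:ℚ) else 0) := by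
      intro k _
      simp only [sigmaFn]
      rw [if_congr (hA k) rfl rfl, if_congr (hB k) rfl rfl]
      split_ifs <;> ring
    rw [Finset.sum_congr rfl step, Finset.sum_sub_distrib,
        ← Finset.sum_filter, ← Finset.sum_filter,
        filter_eq_image' N n' s (n'-c) hs0 (by omega) hNeq (by omega) (by omega) _
          (fun k => Iff.rfl),
        filter_eq_image' N n' s c hs0 (by omega) hNeq hc1 hc_lt _ (fun k => Iff.rfl),
        sum_image' s n' (n'-c) (by omega), sum_image' s n' c (by omega)]
    have hcsub : ((n' - c : ℕ) : ℚ) = (n' : ℚ) - c := by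
      rw [Nat.cast_sub (le_of_lt hc_lt)]
    rw [hcsub]
    have hNq : (N : ℚ) = s * n' := by exact_mod_cast hNeq
    rw [hNq]; ring
  -- translate i = s and i = N - s into conditions on c
  have hvinv_lt : ((i' : ZMod n')⁻¹).val < n' := ZMod.val_lt _
  have hvinv_pos : 1 ≤ ((i' : ZMod n')⁻¹).val :=
    Nat.pos_of_ne_zero (fun h => hinv_ne ((ZMod.val_eq_zero _).mp h))
  have hcval : c = n' - ((i' : ZMod n')⁻¹).val := by
    rw [hcdef, hxdef, ZMod.neg_val, if_neg hinv_ne]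
  have hval_neg_one : (-1 : ZMod n').val = n' - 1 := by
    rw [ZMod.neg_val, if_neg (one_ne_zero), ZMod.val_one]
  have hcast_n1 : ((n' - 1 : ℕ) : ZMod n') = -1 := by
    rw [Nat.cast_sub (by omega : 1 ≤ n'), ZMod.natCast_self, Nat.cast_one]; ring
  have h_i1 : (i' : ZMod n') = 1 ↔ i' = 1 := by
    constructor
    · intro h
      have h2 := congrArg ZMod.val h
      rw [ZMod.val_natCast, Nat.mod_eq_of_lt hi'lt, ZMod.val_one] at h2
      exact h2
    · rintro h; rw [h, Nat.cast_one]
  have h_in1 : (i' : ZMod n') = -1 ↔ i' = n' - 1 := by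
    constructor
    · intro h
      have h2 := congrArg ZMod.val h
      rw [ZMod.val_natCast, Nat.mod_eq_of_lt hi'lt, hval_neg_one] at h2
      exact h2
    · intro h; rw [h, hcast_n1]
  have h_inv1 : (i' : ZMod n')⁻¹ = 1 ↔ (i' : ZMod n') = 1 := by
    constructor
    · intro h; linear_combination hunit - (i' : ZMod n') * h
    · intro h; linear_combination hunit - ((i' : ZMod n')⁻¹) * h
  have h_invn1 : (i' : ZMod n')⁻¹ = -1 ↔ (i' : ZMod n') = -1 := by
    constructor
    · intro h; linear_combination -hunit + (i' : ZMod n') * h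
    · intro h; linear_combination -hunit + ((i' : ZMod n')⁻¹) * h
  have h_vinv1 : ((i' : ZMod n')⁻¹).val = 1 ↔ (i' : ZMod n')⁻¹ = 1 := by
    constructor
    · intro h
      rw [← ZMod.natCast_zmod_val ((i' : ZMod n')⁻¹), h, Nat.cast_one]
    · intro h; rw [h, ZMod.val_one]
  have h_vinvn1 : ((i' : ZMod n')⁻¹).val = n' - 1 ↔ (i' : ZMod n')⁻¹ = -1 := by
    constructor
    · intro h
      rw [← ZMod.natCast_zmod_val ((i' : ZMod n')⁻¹), h, hcast_n1]
    · intro h; rw [h, hval_neg_one]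
  have hNs : N - s = s * (n' - 1) := by
    have : s * (n' - 1) + s * 1 = s * n' := by
      rw [← Nat.mul_add]; congr 1; omega
    omega
  have hiff_s : i = s ↔ c = n' - 1 := by
    rw [show (i = s ↔ i' = 1) from ?_, ← h_i1, ← h_inv1, ← h_vinv1]
    · omega
    · rw [hieq]
      constructor
      · intro h; exact Nat.eq_of_mul_eq_mul_left hs0 (by omega)
      · intro h; rw [h]; omega
  have hiff_Ns : i = N - s ↔ c = 1 := by
    rw [show (i = N - s ↔ i' = n' - 1) from ?_, ← h_in1, ← h_invn1, ← h_vinvn1]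
    · omega
    · rw [hieq, hNs]
      constructor
      · intro h; exact Nat.eq_of_mul_eq_mul_left hs0 h
      · intro h; rw [h]
  -- rational facts
  have hsq : (1:ℚ) ≤ (s:ℚ) := by exact_mod_cast hs0
  have hcq1 : (1:ℚ) ≤ (c:ℚ) := by exact_mod_cast hc1
  have hcq2 : (c:ℚ) ≤ (n':ℚ) - 1 := by
    have h2 : (c:ℚ) + 1 ≤ (n':ℚ) := by exact_mod_cast (by omega : c + 1 ≤ n')
    linarith
  have hNq : (N:ℚ) = s * n' := by exact_mod_cast hNeq
  have hn'q : (2:ℚ) ≤ (n':ℚ) := by exact_mod_cast hn'2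
  have hs_nn : (0:ℚ) ≤ (s:ℚ) := by linarith
  have p1 : (s:ℚ) * c ≤ (s:ℚ) * n' - s := by
    have h5 := mul_le_mul_of_nonneg_left hcq2 hs_nn
    have h6 : (s:ℚ) * ((n':ℚ) - 1) = (s:ℚ) * n' - s := by ring
    linarith
  have p2 : (s:ℚ) ≤ (s:ℚ) * c := by
    have h5 := mul_le_mul_of_nonneg_left hcq1 hs_nn
    linarith
  have hb_nonneg : (0:ℚ) ≤ (N:ℚ) - 2 * s := by
    have h5 : (s:ℚ) * 2 ≤ (s:ℚ) * n' := mul_le_mul_of_nonneg_left hn'q hs_nn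
    linarith
  rw [hsum]
  constructor
  · rw [abs_le]
    constructor
    · linarith
    · linarith
  · rw [abs_eq hb_nonneg]
    constructor
    · rintro (h | h)
      · right
        rw [hiff_Ns]
        have h2 : (2*(s:ℚ)) * c = (2*(s:ℚ)) * 1 := by linarith
        have h3 : (c:ℚ) = 1 := mul_left_cancel₀ (ne_of_gt (by linarith : (0:ℚ) < 2*(s:ℚ))) h2
        exact_mod_cast h3
      · left
        rw [hiff_s]
        have h2 : (2*(s:ℚ)) * c = (2*(s:ℚ)) * ((n':ℚ) - 1) := by linear_combination -h + 2*hNq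
        have h3 : (c:ℚ) = (n':ℚ) - 1 := mul_left_cancel₀ (ne_of_gt (by linarith : (0:ℚ) < 2*(s:ℚ))) h2
        have h4 : (c:ℚ) = ((n' - 1 : ℕ) : ℚ) := by
          rw [Nat.cast_sub (by omega : 1 ≤ n'), Nat.cast_one]; exact h3
        exact_mod_cast h4
    · rintro (h | h)
      · rw [hiff_s] at h
        right
        have hcq : (c:ℚ) = (n':ℚ) - 1 := by
          rw [h, Nat.cast_sub (by omega : 1 ≤ n'), Nat.cast_one]
        rw [hcq, hNq]; ring
      · rw [hiff_Ns] at h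
        left
        have hcq : (c:ℚ) = 1 := by rw [h, Nat.cast_one]
        rw [hcq]; ring
end

section
/- Let N ≥ 2 and let d_1, …, d_{N−1} and a_1, …, a_{N−1} be nonnegative integers with a_i ≤ d_i for all i and a_i = 0 whenever gcd(i,N) ≠ 1. Then −((N − 2)/N)·Σ_{i: gcd(i,N)=1} a_i + Σ_{σ proper divisor of N} f_N(σ)·Σ_{i: gcd(i,N)=σ} d_i ≥ 0. (This uses that f_N(1) − (N−2)/N = (N−2)(5N−11)/(6N) ≥ 0 and f_N(σ) ≥ 0 for every proper divisor σ of N.) -/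
open Finset

/-- The function `f_N(σ) = (N − σ − 1) − (N − 2σ)(N/σ + 5)/(6N)`, for natural `σ`,
with values in `ℚ`. -/
def fNQ (N s : ℕ) : ℚ :=
  ((N : ℚ) - (s : ℚ) - 1) - ((N : ℚ) - 2 * (s : ℚ)) * ((N : ℚ) / (s : ℚ) + 5) / (6 * (N : ℚ))

lemma fNQ_nonneg (N s : ℕ) (hN : 2 ≤ N) (hs : s ∈ N.properDivisors) : 0 ≤ fNQ N s := by
  obtain ⟨hdvd, hlt⟩ := Nat.mem_properDivisors.1 hs
  obtain ⟨k, hk⟩ := hdvd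
  have hs0 : s ≠ 0 := by rintro rfl; simp at hk; omega
  have hk0 : k ≠ 0 := by rintro rfl; simp at hk; omega
  have hk1 : k ≠ 1 := by rintro rfl; omega
  have hsQ : (1 : ℚ) ≤ (s : ℚ) := by exact_mod_cast Nat.one_le_iff_ne_zero.2 hs0
  have hkQ : (2 : ℚ) ≤ (k : ℚ) := by exact_mod_cast (by omega : 2 ≤ k)
  have hNQ : (N : ℚ) = (s : ℚ) * (k : ℚ) := by exact_mod_cast hk
  have hsne : (s : ℚ) ≠ 0 := by positivity
  have hdiv : (N : ℚ) / (s : ℚ) = (k : ℚ) := by rw [hNQ]; field_simp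
  unfold fNQ
  rw [hdiv, hNQ, sub_nonneg, div_le_iff₀ (by positivity)]
  nlinarith [mul_nonneg (by linarith : (0:ℚ) ≤ (s:ℚ)) (mul_nonneg (by linarith : (0:ℚ) ≤ (k:ℚ)-1) (by linarith : (0:ℚ) ≤ (k:ℚ)-2)),
    mul_nonneg (by linarith : (0:ℚ) ≤ (s:ℚ)) (mul_nonneg (by linarith : (0:ℚ) ≤ (s:ℚ)-1) (mul_nonneg (by linarith : (0:ℚ) ≤ (k:ℚ)) (by linarith : (0:ℚ) ≤ (k:ℚ)-1)))]

lemma fNQ_one_ge (N : ℕ) (hN : 2 ≤ N) : ((N : ℚ) - 2) / (N : ℚ) ≤ fNQ N 1 := by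
  rcases (by omega : N = 2 ∨ 3 ≤ N) with h | h
  · subst h; norm_num [fNQ]
  · have hNQ : (3 : ℚ) ≤ (N : ℚ) := by exact_mod_cast h
    have hNne : (N : ℚ) ≠ 0 := by positivity
    rw [← sub_nonneg]
    have heq : fNQ N 1 - ((N:ℚ) - 2) / (N:ℚ)
        = (((N:ℚ) - 2) * (5 * (N:ℚ) - 11)) / (6 * (N:ℚ)) := by
      unfold fNQ; push_cast; field_simp; ring
    rw [heq]
    apply div_nonneg
    · exact mul_nonneg (by linarith) (by linarith)
    · positivity

/-- For `N ≥ 2` and nonnegative integers `d_i`, `a_i` with `a_i ≤ d_i`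
and `a_i = 0` whenever `gcd(i,N) ≠ 1`,
`−((N − 2)/N)·Σ_{gcd(i,N)=1} a_i + Σ_{σ proper divisor of N} f_N(σ)·Σ_{gcd(i,N)=σ} d_i ≥ 0`. -/
theorem lhs_nonneg (N : ℕ) (d a : ℕ → ℕ) (hN : 2 ≤ N)
    (had : ∀ i ∈ Icc 1 (N - 1), a i ≤ d i)
    (ha0 : ∀ i ∈ Icc 1 (N - 1), Nat.gcd i N ≠ 1 → a i = 0) :
    0 ≤ -(((N : ℚ) - 2) / (N : ℚ))
          * ∑ i ∈ (Icc 1 (N - 1)).filter (fun i => Nat.gcd i N = 1), (a i : ℚ)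
        + ∑ s ∈ N.properDivisors, fNQ N s
          * ∑ i ∈ (Icc 1 (N - 1)).filter (fun i => Nat.gcd i N = s), (d i : ℚ) := by
  have h1mem : 1 ∈ N.properDivisors := Nat.one_mem_properDivisors_iff_one_lt.2 (by omega)
  rw [← Finset.insert_erase h1mem, Finset.sum_insert (Finset.notMem_erase _ _)]
  set A := ∑ i ∈ (Icc 1 (N - 1)).filter (fun i => Nat.gcd i N = 1), (a i : ℚ) with hA
  set D1 := ∑ i ∈ (Icc 1 (N - 1)).filter (fun i => Nat.gcd i N = 1), (d i : ℚ) with hD1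
  have hAD : A ≤ D1 :=
    Finset.sum_le_sum fun i hi => by exact_mod_cast had i (Finset.mem_filter.1 hi).1
  have hA0 : (0:ℚ) ≤ A := Finset.sum_nonneg fun i _ => by positivity
  have hD0 : (0:ℚ) ≤ D1 := hA0.trans hAD
  have hrest : (0:ℚ) ≤ ∑ s ∈ N.properDivisors.erase 1, fNQ N s
      * ∑ i ∈ (Icc 1 (N - 1)).filter (fun i => Nat.gcd i N = s), (d i : ℚ) :=
    Finset.sum_nonneg fun s hs => mul_nonneg
      (fNQ_nonneg N s hN (Finset.mem_of_mem_erase hs))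
      (Finset.sum_nonneg fun i _ => by positivity)
  have hc : (0:ℚ) ≤ ((N:ℚ) - 2) / (N:ℚ) := by
    apply div_nonneg
    · have : (2:ℚ) ≤ (N:ℚ) := by exact_mod_cast hN
      linarith
    · positivity
  have hf1 := fNQ_one_ge N hN
  nlinarith [mul_nonneg hc (sub_nonneg.2 hAD), mul_nonneg (sub_nonneg.2 hf1) hD0]
end
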